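/- Let E be a field and g ∈ E⟦x₁,...,xₙ⟧[z] a polynomial in z with power series coefficients such that g(0,...,0, 0) = 0 and ∂g/∂z(0,...,0, 0) ≠ 0 (i.e., the constant coefficient γ₀ of g has positive order or is zero and the linear coefficient γ₁ is a unit). Then there exists a unique power series α ∈ E⟦x₁,...,xₙ⟧ with α(0,...,0) = 0 and g(α) = 0. -/

import Mathlib

open Polynomial MvPowerSeries

section aux
variable {R : Type*} [CommRing R]

/-- Discrete Taylor expansion to second order, for `x^k`. -/
lemma pow_taylor (a e : R) (k : ℕ) :
    ∃ h : R, (a + e) ^ k = a ^ k + (k : R) * a ^ (k - 1) * e + e ^ 2 * h := by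
  cases k with
  | zero => exact ⟨0, by simp⟩
  | succ k =>
    induction k with
    | zero => exact ⟨0, by simp⟩
    | succ k ih =>
      obtain ⟨h, hh⟩ := ih
      refine ⟨(k + 1 : R) * a ^ k + h * (a + e), ?_⟩
      have : (a + e) ^ (k + 2) = ((a + e) ^ (k + 1)) * (a + e) := by ring
      rw [this, hh]
      push_cast
      ring

/-- Discrete Taylor expansion to second order. -/
lemma eval_taylor (p : R[X]) (a e : R) :
    ∃ h : R, p.eval (a + e) = p.eval a + (Polynomial.derivative p).eval a * e + e ^ 2 * h := by
  induction p using Polynomial.induction_on' with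
  | add p q hp hq =>
    obtain ⟨h₁, e₁⟩ := hp
    obtain ⟨h₂, e₂⟩ := hq
    exact ⟨h₁ + h₂, by simp [e₁, e₂]; ring⟩
  | monomial k c =>
    obtain ⟨h, hh⟩ := pow_taylor a e k
    refine ⟨c * h, ?_⟩
    rw [Polynomial.derivative_monomial]
    simp only [Polynomial.eval_monomial, hh]
    ring
end aux

namespace Stmt11Aux

variable {E : Type*} [Field E] {n : ℕ}

/-- total degree of an exponent. -/
def deg (d : Fin n →₀ ℕ) : ℕ := ∑ i, d i

lemma deg_add (d e : Fin n →₀ ℕ) : deg (d + e) = deg d + deg e := by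
  simp [deg, Finset.sum_add_distrib]

lemma deg_eq_zero {d : Fin n →₀ ℕ} (h : deg d = 0) : d = 0 := by
  ext i
  have := Finset.sum_eq_zero_iff.mp h i (Finset.mem_univ i)
  simpa using this

/-- The ideal of power series all of whose coefficients in degree `< k` vanish. -/
def J (E : Type*) [Field E] (n k : ℕ) : Ideal (MvPowerSeries (Fin n) E) where
  carrier := {φ | ∀ d : Fin n →₀ ℕ, deg d < k → MvPowerSeries.coeff d φ = 0}
  zero_mem' := by intro d _; simp
  add_mem' := by intro a b ha hb d hd; simp [ha d hd, hb d hd]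
  smul_mem' := by
    intro c x hx d hd
    rw [smul_eq_mul, MvPowerSeries.coeff_mul]
    refine Finset.sum_eq_zero fun p hp => ?_
    rw [Finset.HasAntidiagonal.mem_antidiagonal] at hp
    have : deg p.2 < k := by
      have := deg_add p.1 p.2
      rw [hp] at this
      omega
    rw [hx p.2 this, mul_zero]

lemma mem_J {k : ℕ} {φ : MvPowerSeries (Fin n) E} :
    φ ∈ J E n k ↔ ∀ d : Fin n →₀ ℕ, deg d < k → MvPowerSeries.coeff d φ = 0 := Iff.rfl

lemma J_mul {a b : ℕ} {φ ψ : MvPowerSeries (Fin n) E} (hφ : φ ∈ J E n a) (hψ : ψ ∈ J E n b) :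
    φ * ψ ∈ J E n (a + b) := by
  intro d hd
  rw [MvPowerSeries.coeff_mul]
  refine Finset.sum_eq_zero fun p hp => ?_
  rw [Finset.HasAntidiagonal.mem_antidiagonal] at hp
  have hsum : deg p.1 + deg p.2 < a + b := by rw [← deg_add, hp]; exact hd
  rcases lt_or_ge (deg p.1) a with h | h
  · rw [hφ p.1 h, zero_mul]
  · rw [hψ p.2 (by omega), mul_zero]

lemma J_mono {k l : ℕ} (h : k ≤ l) : J E n l ≤ J E n k :=
  fun _ hφ d hd => hφ d (lt_of_lt_of_le hd h)

lemma mem_J_one {φ : MvPowerSeries (Fin n) E} :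
    φ ∈ J E n 1 ↔ MvPowerSeries.constantCoeff φ = 0 := by
  constructor
  · intro h
    rw [← MvPowerSeries.coeff_zero_eq_constantCoeff_apply]
    exact h 0 (by simp [deg])
  · intro h d hd
    have : d = 0 := deg_eq_zero (by omega)
    rw [this, MvPowerSeries.coeff_zero_eq_constantCoeff_apply, h]

lemma eq_zero_of_forall_mem_J {φ : MvPowerSeries (Fin n) E} (h : ∀ k, φ ∈ J E n k) : φ = 0 := by
  apply MvPowerSeries.ext
  intro d
  rw [map_zero]
  exact h (deg d + 1) d (by omega)

lemma constantCoeff_eval {φ : MvPowerSeries (Fin n) E}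
    (hφ : MvPowerSeries.constantCoeff φ = 0) (p : Polynomial (MvPowerSeries (Fin n) E)) :
    MvPowerSeries.constantCoeff (p.eval φ) =
      MvPowerSeries.constantCoeff (p.coeff 0) := by
  have h1 : p.eval φ = p.eval₂ (RingHom.id _) φ := by rw [Polynomial.eval]
  rw [h1, Polynomial.hom_eval₂, RingHomCompTriple.comp_eq, hφ, Polynomial.eval₂_at_zero]

end Stmt11Aux

open Stmt11Aux in
/-- Formal implicit function theorem: if `g ∈ E⟦x₁,…,xₙ⟧[z]` satisfies `g(0,0) = 0` and
`(∂g/∂z)(0,0) ≠ 0`, then `g` has a unique power series root `α` with `α(0) = 0`. -/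
theorem stmt11 {E : Type*} [Field E] (n : ℕ)
    (g : Polynomial (MvPowerSeries (Fin n) E))
    (h0 : MvPowerSeries.constantCoeff (g.coeff 0) = 0)
    (h1 : MvPowerSeries.constantCoeff ((Polynomial.derivative g).coeff 0) ≠ 0) :
    ∃! α : MvPowerSeries (Fin n) E,
      MvPowerSeries.constantCoeff α = 0 ∧ Polynomial.eval α g = 0 := by
  classical
  set R := MvPowerSeries (Fin n) E
  set g' := Polynomial.derivative g with hg'
  -- derivative evaluated at any element of J 1 is a unit
  have hunit : ∀ b : R, b ∈ J E n 1 → IsUnit (g'.eval b) := by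
    intro b hb
    rw [MvPowerSeries.isUnit_iff_constantCoeff, constantCoeff_eval (mem_J_one.mp hb)]
    exact isUnit_iff_ne_zero.mpr h1
  -- Newton sequence
  let c : ℕ → R := fun m => Nat.recOn m 0 fun _ b => b - g.eval b * Ring.inverse (g'.eval b)
  have hc : ∀ m, c (m + 1) = c m - g.eval (c m) * Ring.inverse (g'.eval (c m)) := fun m => rfl
  have hc1 : ∀ m, c m ∈ J E n 1 ∧ g.eval (c m) ∈ J E n (m + 1) := by
    intro m
    induction m with
    | zero =>
      refine ⟨(J E n 1).zero_mem, ?_⟩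
      have hc0 : c 0 = 0 := rfl
      rw [hc0, ← Polynomial.coeff_zero_eq_eval_zero]
      exact mem_J_one.mpr h0
    | succ m ih =>
      obtain ⟨ih1, ih2⟩ := ih
      have hmem : g.eval (c m) * Ring.inverse (g'.eval (c m)) ∈ J E n (m + 1) :=
        Ideal.mul_mem_right _ _ ih2
      have hcm1 : c (m + 1) ∈ J E n 1 := by
        rw [hc]
        exact sub_mem ih1 (J_mono (by omega) hmem)
      refine ⟨hcm1, ?_⟩
      obtain ⟨h, hh⟩ := eval_taylor g (c m) (-(g.eval (c m) * Ring.inverse (g'.eval (c m))))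
      have key : c (m + 1) = c m + -(g.eval (c m) * Ring.inverse (g'.eval (c m))) := by
        rw [hc]; ring
      rw [key, hh]
      have hcancel : g'.eval (c m) * Ring.inverse (g'.eval (c m)) = 1 :=
        Ring.mul_inverse_cancel _ (hunit _ ih1)
      have : g.eval (c m) + Polynomial.eval (c m) g' *
          -(g.eval (c m) * Ring.inverse (g'.eval (c m))) = 0 := by
        have : Polynomial.eval (c m) g' * -(g.eval (c m) * Ring.inverse (g'.eval (c m)))
            = -((g'.eval (c m) * Ring.inverse (g'.eval (c m))) * g.eval (c m)) := by ring
        rw [this, hcancel, one_mul, add_neg_cancel]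
      rw [this, zero_add]
      have hsq : (-(g.eval (c m) * Ring.inverse (g'.eval (c m)))) ^ 2 ∈ J E n (m + 1 + (m + 1)) := by
        have h2 := J_mul hmem hmem
        have e1 : (-(g.eval (c m) * Ring.inverse (g'.eval (c m)))) ^ 2
            = (g.eval (c m) * Ring.inverse (g'.eval (c m)))
              * (g.eval (c m) * Ring.inverse (g'.eval (c m))) := by ring
        rw [e1]; exact h2
      exact J_mono (by omega) (Ideal.mul_mem_right h _ hsq)
  -- Cauchy property
  have aux : ∀ m k, c (m + k) - c m ∈ J E n m := by
    intro m k
    induction k with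
    | zero => simp only [Nat.add_zero, sub_self]; exact (J E n m).zero_mem
    | succ k ih =>
      have step : c (m + k + 1) - c (m + k) ∈ J E n m := by
        rw [hc]
        have : c (m + k) - g.eval (c (m + k)) * Ring.inverse (g'.eval (c (m + k))) - c (m + k)
            = -(g.eval (c (m + k)) * Ring.inverse (g'.eval (c (m + k)))) := by ring
        rw [this]
        exact neg_mem (J_mono (by omega) (Ideal.mul_mem_right _ _ (hc1 (m + k)).2))
      have : c (m + (k + 1)) - c m = (c (m + k + 1) - c (m + k)) + (c (m + k) - c m) := by
        rw [show m + (k + 1) = m + k + 1 by omega]; ring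
      rw [this]
      exact add_mem step ih
  have aux' : ∀ m m', m ≤ m' → c m' - c m ∈ J E n m := by
    intro m m' h
    obtain ⟨k, rfl⟩ := Nat.exists_eq_add_of_le h
    exact aux m k
  -- the limit
  let a : MvPowerSeries (Fin n) E := fun d => MvPowerSeries.coeff d (c (deg d + 1))
  have ha : ∀ m, a - c m ∈ J E n m := by
    intro m d hd
    rw [map_sub]
    have h1 : MvPowerSeries.coeff d a = MvPowerSeries.coeff d (c (deg d + 1)) := rfl
    have h2 : MvPowerSeries.coeff d (c m - c (deg d + 1)) = 0 :=
      aux' (deg d + 1) m (by omega) d (by omega)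
    rw [map_sub] at h2
    rw [h1]
    linear_combination -h2
  have haJ1 : a ∈ J E n 1 := by
    have := ha 1
    have h2 := (hc1 1).1
    have : a = (a - c 1) + c 1 := by ring
    rw [this]
    exact add_mem (ha 1) h2
  have hroot : g.eval a = 0 := by
    apply eq_zero_of_forall_mem_J
    intro m
    have hsub : g.eval a - g.eval (c m) ∈ J E n m := by
      obtain ⟨q, hq⟩ := Polynomial.sub_dvd_eval_sub a (c m) g
      rw [hq]
      exact Ideal.mul_mem_right _ _ (ha m)
    have : g.eval a = (g.eval a - g.eval (c m)) + g.eval (c m) := by ring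
    rw [this]
    exact add_mem hsub (J_mono (by omega) (hc1 m).2)
  refine ⟨a, ⟨mem_J_one.mp haJ1, hroot⟩, ?_⟩
  -- uniqueness
  rintro β ⟨hβc, hβr⟩
  have hβJ : β ∈ J E n 1 := mem_J_one.mpr hβc
  have hstep : ∀ k, β - a ∈ J E n (k + 1) → β - a ∈ J E n (k + 2) := by
    intro k hk
    obtain ⟨h, hh⟩ := eval_taylor g a (β - a)
    rw [add_sub_cancel, hβr, hroot, zero_add] at hh
    -- 0 = g'.eval a * (β - a) + (β - a)^2 * h
    have hm : g'.eval a * (β - a) = -((β - a) ^ 2 * h) := by linear_combination -hh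
    have hsq : (β - a) ^ 2 * h ∈ J E n (k + 2) := by
      have h2 := Ideal.mul_mem_right h _ (J_mul hk hk)
      have e1 : (β - a) ^ 2 * h = (β - a) * (β - a) * h := by ring
      rw [e1]
      exact J_mono (by omega) h2
    have hmem : g'.eval a * (β - a) ∈ J E n (k + 2) := by rw [hm]; exact neg_mem hsq
    have hu := hunit a haJ1
    have : β - a = Ring.inverse (g'.eval a) * (g'.eval a * (β - a)) := by
      rw [← mul_assoc, Ring.inverse_mul_cancel _ hu, one_mul]
    rw [this]
    exact Ideal.mul_mem_left _ _ hmem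
  have hall : ∀ k, β - a ∈ J E n (k + 1) := by
    intro k
    induction k with
    | zero => exact sub_mem hβJ haJ1
    | succ k ih => exact hstep k ih
  have : β - a = 0 := eq_zero_of_forall_mem_J fun k => J_mono (by omega) (hall k)
  linear_combination this
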